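/- Let k be a positive integer with 1 ≤ k ≤ n/2. Then every (k,k)-design C ⊆ F_2^n satisfies |C| ≥ ∑_{i=0}^k C(n−1, i), where C(n−1,i) denotes the binomial coefficient. -/

import Mathlib

open Finset

/-- The Krawtchouk polynomials `Q_i^{(n)}(t)`, determined by `Q_0 = 1`, `Q_1 = t` and the
three-term recurrence `n·t·Q_i(t) = (n−i)·Q_{i+1}(t) + i·Q_{i−1}(t)`. -/
noncomputable def kraw (n : ℕ) : ℕ → ℝ → ℝ
  | 0, _ => 1
  | 1, t => t
  | (i+2), t =>
      ((n : ℝ) * t * kraw n (i+1) t - ((i : ℝ) + 1) * kraw n i t) / ((n : ℝ) - ((i : ℝ) + 1))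

/-- The "inner product" `⟨x,y⟩ = 1 − 2 d(x,y)/n`. -/
noncomputable def ip (n : ℕ) (x y : Fin n → ZMod 2) : ℝ :=
  1 - 2 * (hammingDist x y : ℝ) / (n : ℝ)

/-- The `i`-th moment `M_i(C) = ∑_{x,y ∈ C} Q_i^{(n)}(⟨x,y⟩)`. -/
noncomputable def moment (n : ℕ) (C : Finset (Fin n → ZMod 2)) (i : ℕ) : ℝ :=
  ∑ x ∈ C, ∑ y ∈ C, kraw n i (ip n x y)

/-- The antipodal (complement) point `−x`. -/
def antip {n : ℕ} (x : Fin n → ZMod 2) : Fin n → ZMod 2 := fun j => x j + 1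

/-- `C` is a `(k,k)`-design: a nonempty code with `M_i(C) = 0` for all even `i` with `2 ≤ i ≤ 2k`. -/
def IsKKDesign (n k : ℕ) (C : Finset (Fin n → ZMod 2)) : Prop :=
  C.Nonempty ∧ ∀ j : ℕ, 1 ≤ j → j ≤ k → moment n C (2 * j) = 0

/-- `C` is an `m`-design: a nonempty code with `M_i(C) = 0` for all `1 ≤ i ≤ m`. -/
def IsMDesign (n m : ℕ) (C : Finset (Fin n → ZMod 2)) : Prop :=
  C.Nonempty ∧ ∀ i : ℕ, 1 ≤ i → i ≤ m → moment n C i = 0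

/-- Generalized binomial coefficient `C(z,j)` for real `z`. -/
noncomputable def gchoose (z : ℝ) (j : ℕ) : ℝ :=
  (∏ i ∈ Finset.range j, (z - (i : ℝ))) / (Nat.factorial j : ℝ)

/-- The Krawtchouk polynomial `K_i^{(m)}(z)` in the variable `z`. -/
noncomputable def krawK (m i : ℕ) (z : ℝ) : ℝ :=
  ∑ j ∈ Finset.range (i + 1), (-1 : ℝ) ^ j * gchoose z j * gchoose ((m : ℝ) - z) (i - j)

/-- The adjacent polynomial `Q_i^{1,1}(t) = K_i^{(n−2)}(n(1−t)/2 − 1) / ∑_{j=0}^i C(n−1,j)`. -/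
noncomputable def Q11 (n i : ℕ) (t : ℝ) : ℝ :=
  krawK (n - 2) i ((n : ℝ) * (1 - t) / 2 - 1) /
    (∑ j ∈ Finset.range (i + 1), ((n - 1).choose j : ℝ))

namespace S7

variable {n : ℕ}

noncomputable def sgn (a : ZMod 2) : ℝ := if a = 0 then 1 else -1

lemma zmod2_cases : ∀ a : ZMod 2, a = 0 ∨ a = 1 := by decide

lemma sgn_sq (a : ZMod 2) : sgn a * sgn a = 1 := by
  unfold sgn; split <;> norm_num

lemma sgn_add (a b : ZMod 2) : sgn (a + b) = sgn a * sgn b := by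
  have h11 : (1 : ZMod 2) + 1 = 0 := by decide
  rcases zmod2_cases a with ha | ha <;> rcases zmod2_cases b with hb | hb <;>
    subst ha <;> subst hb <;> simp [sgn, h11]

noncomputable def chr (S : Finset (Fin n)) (z : Fin n → ZMod 2) : ℝ :=
  ∏ j ∈ S, sgn (z j)

lemma chr_empty (z : Fin n → ZMod 2) : chr ∅ z = 1 := by simp [chr]

lemma chr_mul (S T : Finset (Fin n)) (z : Fin n → ZMod 2) :
    chr S z * chr T z = chr (symmDiff S T) z := by
  have hU : symmDiff S T ∪ S ∩ T = S ∪ T := symmDiff_sup_inf S T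
  have hd : Disjoint (symmDiff S T) (S ∩ T) := disjoint_symmDiff_inf S T
  have h1 : chr S z * chr T z = chr (S ∪ T) z * chr (S ∩ T) z :=
    (Finset.prod_union_inter).symm
  have h2 : chr (S ∪ T) z = chr (symmDiff S T) z * chr (S ∩ T) z := by
    rw [chr, ← hU, Finset.prod_union hd]; rfl
  have h3 : chr (S ∩ T) z * chr (S ∩ T) z = 1 := by
    rw [chr, ← Finset.prod_mul_distrib]
    exact Finset.prod_eq_one fun j _ => sgn_sq (z j)
  calc chr S z * chr T z = chr (symmDiff S T) z * (chr (S ∩ T) z * chr (S ∩ T) z) := by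
        rw [h1, h2]; ring
    _ = chr (symmDiff S T) z := by rw [h3, mul_one]

noncomputable def Wf (n i : ℕ) (z : Fin n → ZMod 2) : ℝ :=
  ∑ S ∈ Finset.powersetCard i (univ : Finset (Fin n)), chr S z

lemma W_rec (i : ℕ) (z : Fin n → ZMod 2) :
    (∑ j : Fin n, sgn (z j)) * Wf n (i+1) z
      = ((i:ℝ)+2) * Wf n (i+2) z + ((n:ℝ) - i) * Wf n i z := by
  have hsplit : (∑ j : Fin n, sgn (z j)) * Wf n (i+1) z
      = (∑ S ∈ powersetCard (i+1) (univ : Finset (Fin n)), ∑ j ∈ S, sgn (z j) * chr S z)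
      + (∑ S ∈ powersetCard (i+1) (univ : Finset (Fin n)), ∑ j ∈ Sᶜ, sgn (z j) * chr S z) := by
    rw [Wf, Finset.mul_sum, ← Finset.sum_add_distrib]
    refine Finset.sum_congr rfl fun S _ => ?_
    rw [← Finset.sum_mul, ← Finset.sum_mul, ← add_mul, Finset.sum_add_sum_compl]
  -- T1
  have hT1 : (∑ S ∈ powersetCard (i+1) (univ : Finset (Fin n)), ∑ j ∈ S, sgn (z j) * chr S z)
      = ((n:ℝ) - i) * Wf n i z := by
    have e1 : ∀ S ∈ powersetCard (i+1) (univ : Finset (Fin n)), ∀ j ∈ S,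
        sgn (z j) * chr S z = chr (S.erase j) z := by
      intro S _ j hj
      rw [chr, ← Finset.mul_prod_erase _ _ hj, ← mul_assoc, sgn_sq, one_mul]; rfl
    calc (∑ S ∈ powersetCard (i+1) (univ : Finset (Fin n)), ∑ j ∈ S, sgn (z j) * chr S z)
        = ∑ S ∈ powersetCard (i+1) (univ : Finset (Fin n)), ∑ j ∈ S, chr (S.erase j) z := by
          exact Finset.sum_congr rfl fun S hS => Finset.sum_congr rfl (e1 S hS)
      _ = ∑ p ∈ (powersetCard (i+1) (univ : Finset (Fin n))).sigma (fun S => S),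
            chr (p.1.erase p.2) z := Finset.sum_sigma' _ _ _
      _ = ∑ p ∈ (powersetCard i (univ : Finset (Fin n))).sigma (fun T => Tᶜ),
            chr p.1 z := by
          refine Finset.sum_nbij' (fun p => ⟨p.1.erase p.2, p.2⟩)
            (fun q => ⟨insert q.2 q.1, q.2⟩) ?_ ?_ ?_ ?_ ?_
          · rintro ⟨S, j⟩ hp
            rw [Finset.mem_sigma] at hp ⊢
            obtain ⟨hS, hj⟩ := hp
            rw [Finset.mem_powersetCard_univ] at hS
            refine ⟨Finset.mem_powersetCard_univ.2 ?_, ?_⟩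
            · rw [Finset.card_erase_of_mem hj, hS]; omega
            · exact Finset.mem_compl.2 (Finset.notMem_erase _ _)
          · rintro ⟨T, j⟩ hq
            rw [Finset.mem_sigma] at hq ⊢
            obtain ⟨hT, hj⟩ := hq
            rw [Finset.mem_powersetCard_univ] at hT
            rw [Finset.mem_compl] at hj
            exact ⟨Finset.mem_powersetCard_univ.2 (by
              rw [Finset.card_insert_of_notMem hj, hT]), Finset.mem_insert_self _ _⟩
          · rintro ⟨S, j⟩ hp
            rw [Finset.mem_sigma] at hp
            simp only [Finset.insert_erase hp.2]
          · rintro ⟨T, j⟩ hq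
            rw [Finset.mem_sigma, Finset.mem_compl] at hq
            simp only [Finset.erase_insert hq.2]
          · rintro ⟨S, j⟩ _; rfl
      _ = ∑ T ∈ powersetCard i (univ : Finset (Fin n)), ∑ _j ∈ Tᶜ, chr T z :=
          (Finset.sum_sigma _ _ _)
      _ = ((n:ℝ) - i) * Wf n i z := by
          by_cases hin : i ≤ n
          · rw [Wf, Finset.mul_sum]
            refine Finset.sum_congr rfl fun T hT => ?_
            rw [Finset.mem_powersetCard_univ] at hT
            rw [Finset.sum_const, Finset.card_compl, hT, Fintype.card_fin, nsmul_eq_mul,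
              Nat.cast_sub hin]
          · have h1 : powersetCard i (univ : Finset (Fin n)) = ∅ := by
              rw [Finset.powersetCard_eq_empty]
              simpa using by omega
            rw [Wf, h1]; simp
  -- T2
  have hT2 : (∑ S ∈ powersetCard (i+1) (univ : Finset (Fin n)), ∑ j ∈ Sᶜ, sgn (z j) * chr S z)
      = ((i:ℝ)+2) * Wf n (i+2) z := by
    have e2 : ∀ S ∈ powersetCard (i+1) (univ : Finset (Fin n)), ∀ j ∈ Sᶜ,
        sgn (z j) * chr S z = chr (insert j S) z := by
      intro S _ j hj
      rw [Finset.mem_compl] at hj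
      simp [chr, Finset.prod_insert hj]
    calc (∑ S ∈ powersetCard (i+1) (univ : Finset (Fin n)), ∑ j ∈ Sᶜ, sgn (z j) * chr S z)
        = ∑ S ∈ powersetCard (i+1) (univ : Finset (Fin n)), ∑ j ∈ Sᶜ, chr (insert j S) z := by
          exact Finset.sum_congr rfl fun S hS => Finset.sum_congr rfl (e2 S hS)
      _ = ∑ p ∈ (powersetCard (i+1) (univ : Finset (Fin n))).sigma (fun S => Sᶜ),
            chr (insert p.2 p.1) z := Finset.sum_sigma' _ _ _
      _ = ∑ p ∈ (powersetCard (i+2) (univ : Finset (Fin n))).sigma (fun U => U),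
            chr p.1 z := by
          refine Finset.sum_nbij' (fun p => ⟨insert p.2 p.1, p.2⟩)
            (fun q => ⟨q.1.erase q.2, q.2⟩) ?_ ?_ ?_ ?_ ?_
          · rintro ⟨S, j⟩ hp
            rw [Finset.mem_sigma] at hp ⊢
            obtain ⟨hS, hj⟩ := hp
            rw [Finset.mem_powersetCard_univ] at hS
            rw [Finset.mem_compl] at hj
            exact ⟨Finset.mem_powersetCard_univ.2 (by
              rw [Finset.card_insert_of_notMem hj, hS]), Finset.mem_insert_self _ _⟩
          · rintro ⟨U, j⟩ hq
            rw [Finset.mem_sigma] at hq ⊢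
            obtain ⟨hU, hj⟩ := hq
            rw [Finset.mem_powersetCard_univ] at hU
            refine ⟨Finset.mem_powersetCard_univ.2 ?_, Finset.mem_compl.2 (Finset.notMem_erase _ _)⟩
            rw [Finset.card_erase_of_mem hj, hU]; omega
          · rintro ⟨S, j⟩ hp
            rw [Finset.mem_sigma, Finset.mem_compl] at hp
            simp only [Finset.erase_insert hp.2]
          · rintro ⟨U, j⟩ hq
            rw [Finset.mem_sigma] at hq
            simp only [Finset.insert_erase hq.2]
          · rintro ⟨S, j⟩ _; rfl
      _ = ∑ U ∈ powersetCard (i+2) (univ : Finset (Fin n)), ∑ _j ∈ U, chr U z :=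
          (Finset.sum_sigma _ _ _)
      _ = ((i:ℝ)+2) * Wf n (i+2) z := by
          rw [Wf, Finset.mul_sum]
          refine Finset.sum_congr rfl fun U hU => ?_
          rw [Finset.mem_powersetCard_univ] at hU
          rw [Finset.sum_const, hU, nsmul_eq_mul]
          push_cast; ring
  rw [hsplit, hT1, hT2]; ring


lemma sum_sgn_add {n : ℕ} (hn : 0 < n) (x y : Fin n → ZMod 2) :
    ∑ j : Fin n, sgn (x j + y j) = (n : ℝ) * ip n x y := by
  have hz : ∀ a b : ZMod 2, (a + b = 0) ↔ a = b := by decide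
  have h1 : ∀ j, sgn (x j + y j) = if x j = y j then (1:ℝ) else -1 := by
    intro j; rw [sgn]; by_cases h : x j = y j
    · rw [if_pos ((hz _ _).2 h), if_pos h]
    · rw [if_neg (fun c => h ((hz _ _).1 c)), if_neg h]
  have hsum : ∑ j : Fin n, sgn (x j + y j)
      = ∑ j ∈ univ.filter (fun j => x j = y j), (1:ℝ)
        + ∑ j ∈ univ.filter (fun j => ¬ x j = y j), (-1:ℝ) := by
    rw [← Finset.sum_filter_add_sum_filter_not univ (fun j => x j = y j)]
    congr 1
    · exact Finset.sum_congr rfl fun j hj => by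
        rw [h1]; rw [Finset.mem_filter] at hj; rw [if_pos hj.2]
    · exact Finset.sum_congr rfl fun j hj => by
        rw [h1]; rw [Finset.mem_filter] at hj; rw [if_neg hj.2]
  have hd : hammingDist x y = (univ.filter (fun j => ¬ x j = y j)).card := rfl
  have hcards : (univ.filter (fun j => x j = y j)).card
      + (univ.filter (fun j => ¬ x j = y j)).card = n := by
    rw [Finset.card_filter_add_card_filter_not, Finset.card_univ, Fintype.card_fin]
  rw [hsum, Finset.sum_const, Finset.sum_const, nsmul_eq_mul, nsmul_eq_mul]
  rw [ip, hd]
  have hn' : (n:ℝ) ≠ 0 := Nat.cast_ne_zero.2 hn.ne'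
  field_simp
  have := hcards
  push_cast [← this]
  ring

lemma sgn_add' (a b : ZMod 2) : sgn (a + b) = sgn a * sgn b := by
  have h11 : (1 : ZMod 2) + 1 = 0 := by decide
  rcases zmod2_cases a with ha | ha <;> rcases zmod2_cases b with hb | hb <;>
    subst ha <;> subst hb <;> simp [sgn, h11]

lemma kraw_eq {n : ℕ} (hn : 0 < n) :
    ∀ i, i ≤ n → ∀ x y : Fin n → ZMod 2,
      (n.choose i : ℝ) * kraw n i (ip n x y) = Wf n i (fun j => x j + y j) := by
  intro i
  induction i using Nat.strong_induction_on with
  | _ i ih =>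
    match i with
    | 0 =>
      intro _ x y
      simp [kraw, Wf, Finset.powersetCard_zero, chr]
    | 1 =>
      intro _ x y
      have : Wf n 1 (fun j => x j + y j) = ∑ j : Fin n, sgn (x j + y j) := by
        rw [Wf, Finset.powersetCard_one, Finset.sum_map]
        exact Finset.sum_congr rfl fun j _ => by simp [chr]
      rw [this, sum_sgn_add hn x y, Nat.choose_one_right, kraw]
    | (i+2) =>
      intro hi x y
      have h1 := ih (i+1) (by omega) (by omega) x y
      have h0 := ih i (by omega) (by omega) x y
      have hrec := W_rec (n := n) i (fun j => x j + y j)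
      have hsgn := sum_sgn_add hn x y
      have hne : (n:ℝ) - ((i:ℝ)+1) ≠ 0 := by
        have : (i:ℝ) + 1 < (n:ℝ) := by exact_mod_cast (by omega : i + 1 < n)
        linarith
      have hcancel : ((n:ℝ) - ((i:ℝ)+1)) * kraw n (i+2) (ip n x y)
          = (n : ℝ) * ip n x y * kraw n (i+1) (ip n x y)
            - ((i:ℝ)+1) * kraw n i (ip n x y) := by
        rw [kraw]; field_simp
      -- choose identities
      have hc2 : ((i:ℝ)+2) * (n.choose (i+2) : ℝ) = ((n:ℝ) - ((i:ℝ)+1)) * (n.choose (i+1) : ℝ) := by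
        have h := Nat.choose_succ_right_eq n (i+1)
        have hle : i + 1 ≤ n := by omega
        have : ((n.choose (i+2) * (i+2) : ℕ) : ℝ) = ((n.choose (i+1) * (n - (i+1)) : ℕ) : ℝ) :=
          congrArg (fun m : ℕ => (m:ℝ)) h
        push_cast [Nat.cast_sub hle] at this
        linarith [this]
      have hc1 : ((i:ℝ)+1) * (n.choose (i+1) : ℝ) = ((n:ℝ) - (i:ℝ)) * (n.choose i : ℝ) := by
        have h := Nat.choose_succ_right_eq n i
        have hle : i ≤ n := by omega
        have : ((n.choose (i+1) * (i+1) : ℕ) : ℝ) = ((n.choose i * (n - i) : ℕ) : ℝ) :=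
          congrArg (fun m : ℕ => (m:ℝ)) h
        push_cast [Nat.cast_sub hle] at this
        linarith [this]
      -- main computation
      have key : ((i:ℝ)+2) * ((n.choose (i+2) : ℝ) * kraw n (i+2) (ip n x y))
          = ((i:ℝ)+2) * Wf n (i+2) (fun j => x j + y j) := by
        calc ((i:ℝ)+2) * ((n.choose (i+2) : ℝ) * kraw n (i+2) (ip n x y))
            = (((i:ℝ)+2) * (n.choose (i+2) : ℝ)) * kraw n (i+2) (ip n x y) := by ring
          _ = (n.choose (i+1) : ℝ) * (((n:ℝ) - ((i:ℝ)+1)) * kraw n (i+2) (ip n x y)) := by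
              rw [hc2]; ring
          _ = (n.choose (i+1) : ℝ) * ((n : ℝ) * ip n x y * kraw n (i+1) (ip n x y)
                - ((i:ℝ)+1) * kraw n i (ip n x y)) := by rw [hcancel]
          _ = (n : ℝ) * ip n x y * ((n.choose (i+1) : ℝ) * kraw n (i+1) (ip n x y))
                - (((i:ℝ)+1) * (n.choose (i+1) : ℝ)) * kraw n i (ip n x y) := by ring
          _ = (n : ℝ) * ip n x y * Wf n (i+1) (fun j => x j + y j)
                - ((n:ℝ) - (i:ℝ)) * ((n.choose i : ℝ) * kraw n i (ip n x y)) := by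
              rw [h1, hc1]; ring
          _ = (n : ℝ) * ip n x y * Wf n (i+1) (fun j => x j + y j)
                - ((n:ℝ) - (i:ℝ)) * Wf n i (fun j => x j + y j) := by rw [h0]
          _ = ((i:ℝ)+2) * Wf n (i+2) (fun j => x j + y j) := by
              rw [← hsgn, hrec]; ring
      have h2 : ((i:ℝ)+2) ≠ 0 := by positivity
      exact mul_left_cancel₀ h2 key


lemma chr_add {n : ℕ} (S : Finset (Fin n)) (x y : Fin n → ZMod 2) :
    chr S (fun j => x j + y j) = chr S x * chr S y := by
  rw [chr, chr, chr, ← Finset.prod_mul_distrib]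
  exact Finset.prod_congr rfl fun j _ => sgn_add _ _

lemma moment_eq {n : ℕ} (hn : 0 < n) (C : Finset (Fin n → ZMod 2)) (i : ℕ) (hi : i ≤ n) :
    (n.choose i : ℝ) * moment n C i
      = ∑ S ∈ Finset.powersetCard i (univ : Finset (Fin n)), (∑ x ∈ C, chr S x)^2 := by
  have h1 : (n.choose i : ℝ) * moment n C i
      = ∑ x ∈ C, ∑ y ∈ C, ∑ S ∈ Finset.powersetCard i (univ : Finset (Fin n)),
          chr S x * chr S y := by
    rw [moment, Finset.mul_sum]
    refine Finset.sum_congr rfl fun x _ => ?_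
    rw [Finset.mul_sum]
    refine Finset.sum_congr rfl fun y _ => ?_
    rw [kraw_eq hn i hi x y, Wf]
    exact Finset.sum_congr rfl fun S _ => chr_add S x y
  rw [h1]
  calc (∑ x ∈ C, ∑ y ∈ C, ∑ S ∈ Finset.powersetCard i (univ : Finset (Fin n)),
          chr S x * chr S y)
      = ∑ x ∈ C, ∑ S ∈ Finset.powersetCard i (univ : Finset (Fin n)), ∑ y ∈ C,
          chr S x * chr S y := by
        exact Finset.sum_congr rfl fun x _ => Finset.sum_comm
    _ = ∑ S ∈ Finset.powersetCard i (univ : Finset (Fin n)), ∑ x ∈ C, ∑ y ∈ C,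
          chr S x * chr S y := Finset.sum_comm
    _ = ∑ S ∈ Finset.powersetCard i (univ : Finset (Fin n)), (∑ x ∈ C, chr S x)^2 := by
        exact Finset.sum_congr rfl fun S _ => by rw [sq, Finset.sum_mul_sum]

lemma charSum_zero {n k : ℕ} (hn : 0 < n) (hkn : 2 * k ≤ n)
    (C : Finset (Fin n → ZMod 2)) (hC : IsKKDesign n k C)
    (U : Finset (Fin n)) (hne : U.Nonempty) (hev : Even U.card) (hle : U.card ≤ 2 * k) :
    ∑ x ∈ C, chr U x = 0 := by
  obtain ⟨j, hj⟩ := hev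
  have hj1 : 1 ≤ j := by
    rcases Finset.card_pos.2 hne with h
    omega
  have hjk : j ≤ k := by omega
  have hmom : moment n C (2 * j) = 0 := hC.2 j hj1 hjk
  have h2j : 2 * j ≤ n := by omega
  have hsum := moment_eq hn C (2 * j) h2j
  rw [hmom, mul_zero] at hsum
  have hzero : ∀ S ∈ Finset.powersetCard (2*j) (univ : Finset (Fin n)),
      (∑ x ∈ C, chr S x)^2 = 0 := by
    intro S hS
    have := (Finset.sum_eq_zero_iff_of_nonneg
      (fun S _ => sq_nonneg (∑ x ∈ C, chr S x))).1 hsum.symm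
    exact this S hS
  have hU : U ∈ Finset.powersetCard (2*j) (univ : Finset (Fin n)) :=
    Finset.mem_powersetCard_univ.2 (by omega)
  exact pow_eq_zero_iff (by norm_num) |>.1 (hzero U hU)


lemma card_symmDiff_add {α : Type*} [DecidableEq α] (A B : Finset α) :
    (symmDiff A B).card + (A ∩ B).card = (A ∪ B).card := by
  have hd : Disjoint (symmDiff A B) (A ∩ B) := by
    have := disjoint_symmDiff_inf A B
    simpa [Finset.inf_eq_inter] using this
  have h0 : symmDiff A B ∪ (A ∩ B) = A ∪ B := by
    have := symmDiff_sup_inf A B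
    simpa [Finset.sup_eq_union, Finset.inf_eq_inter] using this
  rw [← Finset.card_union_of_disjoint hd, h0]

lemma even_card_symmDiff {α : Type*} [DecidableEq α] (A B : Finset α)
    (hA : Even A.card) (hB : Even B.card) : Even (symmDiff A B).card := by
  have h1 := card_symmDiff_add A B
  have h2 := Finset.card_union_add_card_inter A B
  rw [Nat.even_iff] at hA hB ⊢
  omega

lemma card_symmDiff_le {α : Type*} [DecidableEq α] (A B : Finset α) :
    (symmDiff A B).card ≤ A.card + B.card := by
  have h1 := card_symmDiff_add A B
  have h2 := Finset.card_union_le A B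
  omega

variable {n : ℕ}

/-- extend a set not containing `z0` to one of even size -/
def extS (z0 : Fin n) (S : Finset (Fin n)) : Finset (Fin n) :=
  if Even S.card then S else insert z0 S

lemma hext_even (z0 : Fin n) (S : Finset (Fin n)) (hzS : z0 ∉ S) :
    Even (extS z0 S).card := by
  rw [extS]
  by_cases h : Even S.card
  · rwa [if_pos h]
  · rw [if_neg h, Finset.card_insert_of_notMem hzS]
    rw [Nat.even_iff] at h ⊢; omega

lemma hext_erase (z0 : Fin n) (S : Finset (Fin n)) (hzS : z0 ∉ S) :
    (extS z0 S).erase z0 = S := by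
  rw [extS]
  by_cases h : Even S.card
  · rw [if_pos h]; exact Finset.erase_eq_of_notMem hzS
  · rw [if_neg h]; exact Finset.erase_insert hzS

lemma hmem_ext (z0 : Fin n) (S : Finset (Fin n)) (j : Fin n) (hj : j ≠ z0) :
    j ∈ extS z0 S ↔ j ∈ S := by
  rw [extS]
  by_cases h : Even S.card
  · rw [if_pos h]
  · rw [if_neg h, Finset.mem_insert]
    exact ⟨fun h' => h'.resolve_left hj, Or.inr⟩


theorem stmt_7_aux (n k : ℕ) (hn : 0 < n) (hk : 1 ≤ k) (hkn : 2 * k ≤ n)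
    (C : Finset (Fin n → ZMod 2)) (hC : IsKKDesign n k C) :
    ∑ i ∈ Finset.range (k + 1), (n - 1).choose i ≤ C.card := by
  classical
  set z0 : Fin n := ⟨0, hn⟩ with hz0
  set A : Finset (Finset (Fin n)) :=
    (Finset.range (k+1)).biUnion
      (fun i => Finset.powersetCard i ((univ : Finset (Fin n)).erase z0)) with hA
  have hmemA : ∀ S ∈ A, S.card ≤ k ∧ z0 ∉ S := by
    intro S hS
    rw [hA, Finset.mem_biUnion] at hS
    obtain ⟨i, hi, hSi⟩ := hS
    rw [Finset.mem_powersetCard] at hSi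
    rw [Finset.mem_range] at hi
    obtain ⟨hsub, hcard⟩ := hSi
    exact ⟨by omega, fun hz => (Finset.notMem_erase z0 univ) (hsub hz)⟩
  have hAcard : A.card = ∑ i ∈ Finset.range (k + 1), (n - 1).choose i := by
    rw [hA, Finset.card_biUnion]
    · refine Finset.sum_congr rfl fun i _ => ?_
      rw [Finset.card_powersetCard, Finset.card_erase_of_mem (Finset.mem_univ z0),
        Finset.card_univ, Fintype.card_fin]
    · intro i _ j _ hij
      rw [Function.onFun, Finset.disjoint_left]
      intro S hSi hSj
      rw [Finset.mem_powersetCard] at hSi hSj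
      exact hij (hSi.2 ▸ hSj.2 ▸ rfl)
  -- key orthogonality
  have key : ∀ S ∈ A, ∀ T ∈ A,
      (∑ x ∈ C, chr (extS z0 S) x * chr (extS z0 T) x)
        = if S = T then (C.card : ℝ) else 0 := by
    intro S hS T hT
    obtain ⟨hSk, hSz⟩ := hmemA S hS
    obtain ⟨hTk, hTz⟩ := hmemA T hT
    have hsum : (∑ x ∈ C, chr (extS z0 S) x * chr (extS z0 T) x)
        = ∑ x ∈ C, chr (symmDiff (extS z0 S) (extS z0 T)) x :=
      Finset.sum_congr rfl fun x _ => chr_mul _ _ x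
    by_cases hST : S = T
    · subst hST
      rw [if_pos rfl, hsum, symmDiff_self]
      have hbot : ∀ z : Fin n → ZMod 2, chr (⊥ : Finset (Fin n)) z = (1:ℝ) := by
        intro z; simp [chr, Finset.bot_eq_empty]
      rw [Finset.sum_congr rfl fun x _ => hbot x]
      simp
    · rw [if_neg hST, hsum]
      set U := symmDiff (extS z0 S) (extS z0 T) with hU
      have hUne : U.Nonempty := by
        rw [Finset.nonempty_iff_ne_empty]
        intro hUe
        have heq : extS z0 S = extS z0 T := by
          rw [← symmDiff_eq_bot, ← hU, hUe]; rfl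
        have := congrArg (fun W => W.erase z0) heq
        simp only [hext_erase z0 S hSz, hext_erase z0 T hTz] at this
        exact hST this
      have hUev : Even U.card :=
        even_card_symmDiff _ _ (hext_even z0 S hSz) (hext_even z0 T hTz)
      have hUsub : U ⊆ insert z0 (symmDiff S T) := by
        intro j hj
        by_cases hjz : j = z0
        · rw [hjz]; exact Finset.mem_insert_self _ _
        · refine Finset.mem_insert_of_mem ?_
          rw [hU, Finset.mem_symmDiff] at hj
          rw [Finset.mem_symmDiff]
          rw [hmem_ext z0 S j hjz, hmem_ext z0 T j hjz] at hj
          exact hj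
      have hUcard : U.card ≤ 2 * k := by
        have h1 : U.card ≤ (symmDiff S T).card + 1 :=
          le_trans (Finset.card_le_card hUsub) (Finset.card_insert_le _ _)
        have h2 := card_symmDiff_le S T
        rw [Nat.even_iff] at hUev
        omega
      exact charSum_zero hn hkn C hC U hUne hUev hUcard
  -- orthonormal family
  have hCpos : 0 < C.card := Finset.card_pos.2 hC.1
  have hCne : ((C.card : ℝ)) ≠ 0 := by positivity
  set c : ℝ := (Real.sqrt C.card)⁻¹ with hc
  have hc2 : c * c = (C.card : ℝ)⁻¹ := by
    rw [hc, ← mul_inv, Real.mul_self_sqrt (by positivity)]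
  set u : {S // S ∈ A} → EuclideanSpace ℝ {x // x ∈ C} :=
    fun S => WithLp.toLp 2 (fun x => c * chr (extS z0 S.1) x.1) with hu
  have hON : Orthonormal ℝ u := by
    rw [orthonormal_iff_ite]
    intro S T
    have hinner : (inner ℝ (u S) (u T) : ℝ)
        = (c * c) * ∑ x ∈ C, chr (extS z0 S.1) x * chr (extS z0 T.1) x := by
      rw [← Finset.sum_coe_sort C (fun x => chr (extS z0 S.1) x * chr (extS z0 T.1) x),
        Finset.mul_sum]
      simp only [PiLp.inner_apply, PiLp.toLp_apply, RCLike.inner_apply, conj_trivial, hu]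
      exact Finset.sum_congr rfl fun x _ => by ring
    rw [hinner, key S.1 S.2 T.1 T.2, hc2]
    by_cases hST : S = T
    · rw [if_pos (Subtype.ext_iff.1 hST), if_pos hST, inv_mul_cancel₀ hCne]
    · rw [if_neg (fun h => hST (Subtype.ext h)), if_neg hST, mul_zero]
  have hLI := hON.linearIndependent
  have hbound := hLI.fintype_card_le_finrank
  rw [Fintype.card_coe, finrank_euclideanSpace, Fintype.card_coe] at hbound
  omega

end S7

/-- the universal lower bound `|C| ≥ ∑_{i=0}^k C(n−1,i)` for
`(k,k)`-designs. -/
theorem stmt_7 (n k : ℕ) (hn : 0 < n) (hk : 1 ≤ k) (hkn : 2 * k ≤ n)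
    (C : Finset (Fin n → ZMod 2)) (hC : IsKKDesign n k C) :
    ∑ i ∈ Finset.range (k + 1), (n - 1).choose i ≤ C.card :=
  S7.stmt_7_aux n k hn hk hkn C hC
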